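/- (Theorem 3: S counts excursions.) For every finitely supported function m : {1,2,…} → ℕ, the set of excursions with up-step content m is finite, and the coefficient of the monomial ∏_{i≥1} t_i^{m(i)} in S equals the cardinality of this set. -/

import Mathlib

/- `R = MvPowerSeries ℕ ℚ`, with the product (coefficientwise) topology. -/
noncomputable instance : TopologicalSpace (MvPowerSeries ℕ ℚ) :=
  inferInstanceAs (TopologicalSpace ((ℕ →₀ ℕ) → ℚ))

open MvPowerSeries

/-- A path is a finite list of integers all of whose entries are ≥ -1; entries ≥ 0 are
up steps and the entry -1 is the down step. -/
def IsPath (P : List ℤ) : Prop := ∀ s ∈ P, (-1 : ℤ) ≤ s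

/-- A nonnegative path: a path all of whose prefix sums are ≥ 0. -/
def NonnegPath (P : List ℤ) : Prop := IsPath P ∧ ∀ i : ℕ, 0 ≤ (P.take i).sum

/-- A positive path: a path all of whose nonempty prefix sums are > 0. -/
def PositivePath (P : List ℤ) : Prop :=
  IsPath P ∧ ∀ i : ℕ, 1 ≤ i → i ≤ P.length → 0 < (P.take i).sum

/-- An excursion: a nonnegative path with total sum 0. -/
def Excursion (P : List ℤ) : Prop := NonnegPath P ∧ P.sum = 0

/-- The path `P` has up-step content `m` if for every `i ≥ 1` it has exactly `m i`
steps equal to `i - 1`. -/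
def HasContent (m : ℕ →₀ ℕ) (P : List ℤ) : Prop :=
  ∀ i : ℕ, 1 ≤ i → P.count ((i : ℤ) - 1) = m i

/-! ### Content of a path as a finsupp -/

noncomputable def gCont (P : List ℤ) : ℕ →₀ ℕ :=
  Finsupp.onFinset ((P.map (fun s => (s + 1).toNat)).toFinset)
    (fun i => if 1 ≤ i then P.count ((i : ℤ) - 1) else 0)
    (by
      intro i hi
      simp only [List.mem_toFinset, List.mem_map]
      by_cases h1 : 1 ≤ i
      · rw [if_pos h1] at hi
        have : ((i : ℤ) - 1) ∈ P := List.count_pos_iff.mp (Nat.pos_of_ne_zero hi)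
        exact ⟨(i : ℤ) - 1, this, by omega⟩
      · rw [if_neg h1] at hi; exact absurd rfl hi)

lemma gCont_apply (P : List ℤ) {i : ℕ} (hi : 1 ≤ i) :
    gCont P i = P.count ((i : ℤ) - 1) := by
  simp [gCont, hi]

lemma gCont_zero_apply (P : List ℤ) : gCont P 0 = 0 := by simp [gCont]

lemma hasContent_iff {m : ℕ →₀ ℕ} (hm : m 0 = 0) (P : List ℤ) :
    HasContent m P ↔ gCont P = m := by
  constructor
  · intro h
    ext i
    rcases Nat.eq_zero_or_pos i with h0 | h1
    · rw [h0, gCont_zero_apply, hm]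
    · rw [gCont_apply P h1, h i h1]
  · intro h i hi
    rw [← h, gCont_apply P hi]

lemma gCont_append (P Q : List ℤ) : gCont (P ++ Q) = gCont P + gCont Q := by
  ext i
  rcases Nat.eq_zero_or_pos i with h0 | h1
  · simp [h0, gCont_zero_apply]
  · simp [gCont_apply _ h1, List.count_append]

@[simp] lemma gCont_nil : gCont [] = 0 := by
  ext i; rcases Nat.eq_zero_or_pos i with h0 | h1
  · simp [h0, gCont_zero_apply]
  · simp [gCont_apply _ h1]

lemma gCont_neg_one : gCont [(-1 : ℤ)] = 0 := by
  ext i; rcases Nat.eq_zero_or_pos i with h0 | h1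
  · simp [h0, gCont_zero_apply]
  · rw [gCont_apply _ h1]
    have : ((i : ℤ) - 1) ≠ -1 := by omega
    simp [List.count_cons, this, Ne.symm this]

lemma gCont_cons_nonneg (n : ℕ) (W : List ℤ) :
    gCont ((n : ℤ) :: W) = Finsupp.single (n + 1) 1 + gCont W := by
  ext i
  rcases Nat.eq_zero_or_pos i with h0 | h1
  · subst h0
    simp [gCont_zero_apply, Finsupp.single_apply]
  · rw [Finsupp.add_apply, gCont_apply _ h1, gCont_apply _ h1, List.count_cons,
      Finsupp.single_apply]
    by_cases h : i = n + 1
    · subst h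
      have : ((n : ℤ) + 1 - 1) = (n : ℤ) := by ring
      simp [this]
      omega
    · have h2 : ¬ ((n : ℤ) = (i : ℤ) - 1) := by omega
      have h3 : ¬ (n + 1 = i) := by omega
      simp [h2, h3]

/-! ### Descents -/

def DescFrom (k : ℕ) (W : List ℤ) : Prop :=
  IsPath W ∧ (∀ i : ℕ, 0 ≤ (k : ℤ) + (W.take i).sum) ∧ (k : ℤ) + W.sum = 0

lemma descFrom_zero {W : List ℤ} : DescFrom 0 W ↔ Excursion W := by
  constructor
  · rintro ⟨h1, h2, h3⟩
    exact ⟨⟨h1, fun i => by simpa using h2 i⟩, by simpa using h3⟩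
  · rintro ⟨⟨h1, h2⟩, h3⟩
    exact ⟨h1, fun i => by simpa using h2 i, by simpa using h3⟩

def Dset (k : ℕ) (m : ℕ →₀ ℕ) : Set (List ℤ) := {W | DescFrom k W ∧ gCont W = m}

/-! ### Splitting -/

def splitAux : ℤ → List ℤ → List ℤ × List ℤ
  | _, [] => ([], [])
  | h, s :: W => if h + s < 0 then ([], W) else
      ((s :: (splitAux (h + s) W).1), (splitAux (h + s) W).2)

lemma splitAux_spec : ∀ (E : List ℤ) (h : ℤ) (W' : List ℤ),
    (∀ i : ℕ, 0 ≤ h + (E.take i).sum) → h + E.sum = 0 →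
    splitAux h (E ++ (-1 :: W')) = (E, W')
  | [], h, W', hpre, hsum => by
    have h0 : h = 0 := by simpa using hsum
    subst h0
    simp [splitAux]
  | s :: E, h, W', hpre, hsum => by
    have h1 : 0 ≤ h + s := by simpa using hpre 1
    have h2 : ¬ (h + s < 0) := by omega
    have ih := splitAux_spec E (h + s) W'
      (fun i => by have := hpre (i + 1); simpa [add_assoc] using this)
      (by simp at hsum; linarith [hsum])
    simp only [List.cons_append, splitAux, h2, if_false, if_neg]
    rw [ih]

lemma decompose {k : ℕ} {W : List ℤ} (h : DescFrom (k + 1) W) :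
    ∃ E W', W = E ++ (-1 :: W') ∧ DescFrom 0 E ∧ DescFrom k W' := by
  obtain ⟨hpath, hpre, hsum⟩ := h
  have hex : ∃ i : ℕ, (W.take i).sum < 0 := by
    refine ⟨W.length, ?_⟩
    rw [List.take_length]
    omega
  classical
  let i0 := Nat.find hex
  have hneg : (W.take i0).sum < 0 := Nat.find_spec hex
  have hmin : ∀ j, j < i0 → 0 ≤ (W.take j).sum := fun j hj => by
    have := Nat.find_min hex hj; omega
  have hi0pos : i0 ≠ 0 := by
    intro h0; rw [h0] at hneg; simp at hneg
  obtain ⟨i, hii⟩ : ∃ i, i0 = i + 1 := ⟨i0 - 1, by omega⟩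
  rw [hii] at hneg
  rw [hii] at hmin
  have hi : i < W.length := by
    by_contra hcon
    push_neg at hcon
    have e1 : W.take (i + 1) = W := List.take_of_length_le (by omega)
    have e2 : W.take i = W := List.take_of_length_le hcon
    have := hmin i (Nat.lt_succ_self i)
    rw [e2] at this; rw [e1] at hneg; omega
  have hstep : (W.take (i + 1)).sum = (W.take i).sum + W[i] := List.sum_take_succ W i hi
  have hWi : (-1 : ℤ) ≤ W[i] := hpath _ (List.getElem_mem hi)
  have htake0 : (W.take i).sum = 0 := by
    have := hmin i (Nat.lt_succ_self i); omega
  have hWi1 : W[i] = -1 := by omega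
  have hdrop : W.drop i = W[i] :: W.drop (i + 1) := List.drop_eq_getElem_cons hi
  refine ⟨W.take i, W.drop (i + 1), ?_, ?_, ?_⟩
  · conv_lhs => rw [← List.take_append_drop i W]
    rw [hdrop, hWi1]
  · refine ⟨fun s hs => hpath s (List.take_subset _ _ hs), fun j => ?_, by simpa using htake0⟩
    rw [List.take_take]
    have := hmin (min j i) (by omega)
    omega
  · have htake1 : (W.take (i + 1)).sum = -1 := by omega
    refine ⟨fun s hs => hpath s (List.drop_subset _ _ hs), fun j => ?_, ?_⟩
    · have hadd : W.take ((i + 1) + j) = W.take (i + 1) ++ (W.drop (i + 1)).take j :=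
        List.take_add
      have := hpre ((i + 1) + j)
      rw [hadd, List.sum_append, htake1] at this
      push_cast
      omega
    · have : W.sum = (W.take (i+1)).sum + (W.drop (i+1)).sum := by
        conv_lhs => rw [← List.take_append_drop (i+1) W]
        rw [List.sum_append]
      rw [this, htake1] at hsum
      push_cast
      push_cast at hsum
      omega

/-! ### Finiteness -/

lemma length_bound : ∀ (W : List ℤ) (m : ℕ →₀ ℕ), IsPath W →
    (∀ i : ℕ, 1 ≤ i → W.count ((i : ℤ) - 1) ≤ m i) →
    (W.length : ℤ) + W.sum ≤ ((m.sum fun i k => k * i : ℕ) : ℤ)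
  | [], m, _, _ => by
    have h0 : (0:ℤ) ≤ ((m.sum fun i k => k * i : ℕ) : ℤ) := Int.ofNat_nonneg _
    simpa using h0
  | s :: W, m, hpath, hcount => by
    have hs : (-1 : ℤ) ≤ s := hpath s (List.mem_cons_self)
    rcases eq_or_lt_of_le hs with hneg | hpos
    · -- s = -1
      have ih := length_bound W m (fun x hx => hpath x (List.mem_cons_of_mem _ hx))
        (fun i hi => le_trans (by rw [List.count_cons]; omega) (hcount i hi))
      simp only [List.length_cons, List.sum_cons, ← hneg]
      push_cast
      push_cast at ih
      omega
    · -- s ≥ 0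
      have hs0 : 0 ≤ s := by omega
      set n := s.toNat with hn
      have hsn : (n : ℤ) = s := Int.toNat_of_nonneg hs0
      have hmem : m (n + 1) ≥ 1 := by
        have h1 : 1 ≤ (s :: W).count ((((n : ℕ) + 1 : ℕ) : ℤ) - 1) := by
          have : ((((n : ℕ) + 1 : ℕ) : ℤ) - 1) = s := by push_cast; omega
          rw [this, List.count_cons_self]
          omega
        exact le_trans h1 (hcount (n + 1) (by omega))
      set m' := m - Finsupp.single (n + 1) 1 with hm'
      have hrestore : m' + Finsupp.single (n + 1) 1 = m :=
        tsub_add_cancel_of_le (Finsupp.single_le_iff.mpr hmem)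
      have hcount' : ∀ i : ℕ, 1 ≤ i → W.count ((i : ℤ) - 1) ≤ m' i := by
        intro i hi
        have h1 := hcount i hi
        rw [hm', Finsupp.tsub_apply, Finsupp.single_apply]
        by_cases hij : n + 1 = i
        · subst hij
          have : ((((n : ℕ) + 1 : ℕ) : ℤ) - 1) = s := by push_cast; omega
          rw [this] at h1 ⊢
          rw [List.count_cons_self] at h1
          simpa using by omega
        · have : ((i : ℤ) - 1) ≠ s := by omega
          rw [List.count_cons_of_ne (by omega)] at h1
          simpa [hij] using h1
      have ih := length_bound W m' (fun x hx => hpath x (List.mem_cons_of_mem _ hx)) hcount'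
      have hsum : (m.sum fun i k => k * i : ℕ) = (m'.sum fun i k => k * i : ℕ) + (n + 1) := by
        rw [← hrestore, Finsupp.sum_add_index' (fun i => by simp) (fun i a b => by ring)]
        simp [Finsupp.sum_single_index]
      simp only [List.length_cons, List.sum_cons, hsum]
      push_cast
      push_cast at ih
      omega

lemma finite_Dset (k : ℕ) (m : ℕ →₀ ℕ) : (Dset k m).Finite := by
  classical
  set B := m.support.sup id with hB
  set N := (m.sum fun i k => k * i : ℕ) + k with hN
  have hsub : Dset k m ⊆
      (fun l : List (Fin (B + 2)) => l.map fun j => (j.val : ℤ) - 1) '' {l | l.length ≤ N} := by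
    rintro W ⟨⟨hpath, hpre, hsum⟩, hcont⟩
    have hbnd : ∀ s ∈ W, -1 ≤ s ∧ s + 1 ≤ (B : ℤ) + 1 := by
      intro s hs
      refine ⟨hpath s hs, ?_⟩
      rcases le_or_gt 0 s with h0 | h0
      · have h1 : m (s.toNat + 1) ≥ 1 := by
          rw [← hcont, gCont_apply _ (by omega)]
          have : (((s.toNat + 1 : ℕ) : ℤ) - 1) = s := by omega
          rw [this]
          exact List.count_pos_iff.mpr hs
        have h2 : s.toNat + 1 ∈ m.support := Finsupp.mem_support_iff.mpr (by omega)
        have h3 : s.toNat + 1 ≤ B := Finset.le_sup (f := id) h2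
        omega
      · omega
    have hlen : W.length ≤ N := by
      have h1 := length_bound W m hpath (fun i hi => by rw [← hcont, gCont_apply _ hi])
      have h2 : W.sum = -(k : ℤ) := by omega
      rw [h2] at h1
      rw [hN]
      omega
    refine ⟨W.attach.map (fun x => (⟨(x.1 + 1).toNat, by
      have := hbnd x.1 x.2; omega⟩ : Fin (B + 2))), by simpa using hlen, ?_⟩
    show (W.attach.map _).map _ = W
    rw [List.map_map]
    have : W.attach.map ((fun j : Fin (B + 2) => (j.val : ℤ) - 1) ∘
        (fun x => (⟨(x.1 + 1).toNat, by have := hbnd x.1 x.2; omega⟩ : Fin (B + 2))))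
        = W.attach.map (fun x => ((x.1 + 1).toNat : ℤ) - 1) := by
      apply List.map_congr_left
      intro x _
      simp
    rw [this, List.attach_map_val (l := W) (f := fun s => ((s + 1).toNat : ℤ) - 1)]
    apply List.map_congr_left ?_ |>.trans (List.map_id W)
    intro s hs
    have := hbnd s hs
    simp only [id_eq]
    omega
  exact ((List.finite_length_le (Fin (B + 2)) N).image _).subset hsub

/-! ### Counting -/

lemma Dset_zero_zero : Dset 0 0 = {([] : List ℤ)} := by
  ext P
  constructor
  · rintro ⟨⟨hpath, hpre, hsum⟩, hcont⟩
    cases P with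
    | nil => rfl
    | cons s W =>
      exfalso
      have hs : 0 ≤ s := by have := hpre 1; simpa using this
      have h1 : gCont (s :: W) (s.toNat + 1) = 0 := by rw [hcont]; rfl
      rw [gCont_apply _ (by omega)] at h1
      have h2 : (((s.toNat + 1 : ℕ) : ℤ) - 1) = s := by omega
      rw [h2] at h1
      simp [List.count_cons] at h1
  · rintro rfl
    refine ⟨⟨fun s hs => by simp at hs, fun i => by simp, by simp⟩, by simp⟩

lemma card_sigma' {ι : Type*} [Fintype ι] (f : ι → Type*) [∀ i, Finite (f i)] :
    Nat.card (Sigma f) = ∑ i, Nat.card (f i) := by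
  classical
  letI : ∀ i, Fintype (f i) := fun i => Fintype.ofFinite (f i)
  simp [Nat.card_eq_fintype_card]

lemma splitAux_eq {E W : List ℤ} (hE : DescFrom 0 E) :
    splitAux 0 (E ++ (-1 :: W)) = (E, W) :=
  splitAux_spec E 0 W (fun i => hE.2.1 i) hE.2.2

lemma concat_mem_Dset {k : ℕ} {m : ℕ →₀ ℕ} {p : (ℕ →₀ ℕ) × (ℕ →₀ ℕ)}
    (hp : p.1 + p.2 = m) {E W : List ℤ}
    (hE : E ∈ Dset 0 p.1) (hW : W ∈ Dset k p.2) : E ++ (-1 :: W) ∈ Dset (k + 1) m := by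
  obtain ⟨⟨hEpath, hEpre, hEsum⟩, hEcont⟩ := hE
  obtain ⟨⟨hWpath, hWpre, hWsum⟩, hWcont⟩ := hW
  have hEsum' : E.sum = 0 := by simpa using hEsum
  refine ⟨⟨?_, ?_, ?_⟩, ?_⟩
  · intro s hs
    rw [List.mem_append] at hs
    rcases hs with hs | hs
    · exact hEpath s hs
    · rw [List.mem_cons] at hs
      rcases hs with rfl | hs
      · exact le_refl _
      · exact hWpath s hs
  · intro i
    rw [List.take_append, List.sum_append]
    rcases le_or_gt i E.length with hle | hlt
    · have : i - E.length = 0 := by omega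
      rw [this]
      have := hEpre i
      simp only [List.take_zero, List.sum_nil] at *
      push_cast
      omega
    · rw [List.take_of_length_le (by omega), hEsum']
      obtain ⟨j, hj⟩ : ∃ j, i - E.length = j + 1 := ⟨i - E.length - 1, by omega⟩
      rw [hj, List.take_succ_cons, List.sum_cons]
      have := hWpre j
      push_cast
      push_cast at this
      omega
  · rw [List.sum_append, List.sum_cons, hEsum']
    push_cast
    push_cast at hWsum
    omega
  · rw [gCont_append, show (-1 : ℤ) :: W = [-1] ++ W from rfl, gCont_append, gCont_neg_one,
      hEcont, hWcont, zero_add, hp]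

lemma card_Dset_succ (k : ℕ) (m : ℕ →₀ ℕ) :
    Nat.card (Dset (k + 1) m) =
      ∑ p ∈ Finset.HasAntidiagonal.antidiagonal m, Nat.card (Dset 0 p.1) * Nat.card (Dset k p.2) := by
  classical
  haveI h1 : ∀ (j : ℕ) (μ : ℕ →₀ ℕ), Finite (Dset j μ) := fun j μ => (finite_Dset j μ).to_subtype
  let g : (Σ p : (Finset.HasAntidiagonal.antidiagonal m : Finset _), (Dset 0 p.1.1 × Dset k p.1.2)) →
      Dset (k + 1) m := fun x =>
    ⟨x.2.1.1 ++ (-1 :: x.2.2.1),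
      concat_mem_Dset (Finset.HasAntidiagonal.mem_antidiagonal.mp x.1.2) x.2.1.2 x.2.2.2⟩
  have hbij : Function.Bijective g := by
    constructor
    · rintro ⟨⟨⟨p1, p2⟩, hp⟩, ⟨E1, hE1⟩, ⟨W1, hW1⟩⟩ ⟨⟨⟨q1, q2⟩, hq⟩, ⟨E2, hE2⟩, ⟨W2, hW2⟩⟩ h
      simp only [g, Subtype.mk.injEq] at h
      have hs1 := splitAux_eq (E := E1) (W := W1) hE1.1
      have hs2 := splitAux_eq (E := E2) (W := W2) hE2.1
      rw [h, hs2] at hs1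
      obtain ⟨rfl, rfl⟩ : E2 = E1 ∧ W2 = W1 := by
        constructor <;> [exact congrArg Prod.fst hs1; exact congrArg Prod.snd hs1]
      obtain rfl : p1 = q1 := hE1.2.symm.trans hE2.2
      obtain rfl : p2 = q2 := hW1.2.symm.trans hW2.2
      rfl
    · rintro ⟨W, hW⟩
      obtain ⟨E, W', heq, hE, hW'⟩ := decompose hW.1
      have hmem : gCont E + gCont W' = m := by
        rw [← hW.2, heq, gCont_append, show (-1 : ℤ) :: W' = [-1] ++ W' from rfl,
          gCont_append, gCont_neg_one, zero_add]
      refine ⟨⟨⟨(gCont E, gCont W'), Finset.HasAntidiagonal.mem_antidiagonal.mpr hmem⟩,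
        ⟨E, hE, rfl⟩, ⟨W', hW', rfl⟩⟩, ?_⟩
      exact Subtype.ext heq.symm
  rw [← Nat.card_congr (Equiv.ofBijective g hbij)]
  rw [card_sigma']
  rw [← Finset.sum_coe_sort (Finset.HasAntidiagonal.antidiagonal m)
    (fun p => Nat.card (Dset 0 p.1) * Nat.card (Dset k p.2))]
  exact Finset.sum_congr rfl fun p _ => Nat.card_prod _ _

lemma cons_mem_Dset {m : ℕ →₀ ℕ} {n : ℕ} (hmn : 1 ≤ m (n + 1)) {W : List ℤ}
    (hW : W ∈ Dset n (m - Finsupp.single (n + 1) 1)) : ((n : ℤ) :: W) ∈ Dset 0 m := by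
  obtain ⟨⟨hpath, hpre, hsum⟩, hcont⟩ := hW
  refine ⟨⟨?_, ?_, ?_⟩, ?_⟩
  · intro s hs
    rw [List.mem_cons] at hs
    rcases hs with rfl | hs
    · omega
    · exact hpath s hs
  · intro i
    cases i with
    | zero => simp
    | succ i =>
      rw [List.take_succ_cons, List.sum_cons]
      have := hpre i
      push_cast at *
      omega
  · have := hsum
    rw [List.sum_cons]
    push_cast at *
    omega
  · rw [gCont_cons_nonneg, hcont, add_comm,
      tsub_add_cancel_of_le (Finsupp.single_le_iff.mpr hmn)]

lemma card_Dset_top {m : ℕ →₀ ℕ} (hm0 : m 0 = 0) (hm : m ≠ 0) :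
    Nat.card (Dset 0 m) =
      ∑ n ∈ m.support.image (· - 1), Nat.card (Dset n (m - Finsupp.single (n + 1) 1)) := by
  classical
  haveI hfin : ∀ (j : ℕ) (μ : ℕ →₀ ℕ), Finite (Dset j μ) :=
    fun j μ => (finite_Dset j μ).to_subtype
  have hFmem : ∀ n ∈ m.support.image (· - 1), 1 ≤ m (n + 1) := by
    intro n hn
    obtain ⟨j, hj, rfl⟩ := Finset.mem_image.mp hn
    have hj0 : j ≠ 0 := fun h => by
      rw [h] at hj; exact (Finsupp.mem_support_iff.mp hj) hm0
    have hj1 : j - 1 + 1 = j := by omega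
    rw [hj1]
    exact Nat.one_le_iff_ne_zero.mpr (Finsupp.mem_support_iff.mp hj)
  let g : (Σ n : (m.support.image (· - 1) : Finset ℕ),
      Dset n.1 (m - Finsupp.single (n.1 + 1) 1)) → Dset 0 m :=
    fun x => ⟨(x.1.1 : ℤ) :: x.2.1, cons_mem_Dset (hFmem x.1.1 x.1.2) x.2.2⟩
  have hbij : Function.Bijective g := by
    constructor
    · rintro ⟨⟨n1, hn1⟩, ⟨W1, hW1⟩⟩ ⟨⟨n2, hn2⟩, ⟨W2, hW2⟩⟩ h
      simp only [g, Subtype.mk.injEq, List.cons.injEq] at h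
      obtain ⟨h1, h2⟩ := h
      obtain rfl : n1 = n2 := by exact_mod_cast h1
      subst h2
      rfl
    · rintro ⟨W, hW⟩
      obtain ⟨⟨hpath, hpre, hsum⟩, hcont⟩ := hW
      cases W with
      | nil => exact absurd (by simpa using hcont.symm) hm
      | cons s W0 =>
        have hs : 0 ≤ s := by have := hpre 1; simpa using this
        set n := s.toNat with hn
        have hsn : (n : ℤ) = s := Int.toNat_of_nonneg hs
        have hcount : 1 ≤ m (n + 1) := by
          rw [← hcont, gCont_apply _ (by omega)]
          have h2 : (((n + 1 : ℕ) : ℤ) - 1) = s := by omega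
          rw [h2]
          exact List.count_pos_iff.mpr (List.mem_cons_self)
        have hnF : n ∈ m.support.image (· - 1) :=
          Finset.mem_image.mpr ⟨n + 1, Finsupp.mem_support_iff.mpr (by omega), rfl⟩
        have hcontEq : Finsupp.single (n + 1) 1 + gCont W0 = m := by
          rw [← hcont]
          conv_rhs => rw [show s = ((n : ℤ)) from hsn.symm]
          rw [gCont_cons_nonneg]
        have hW0cont : gCont W0 = m - Finsupp.single (n + 1) 1 := by
          rw [← hcontEq, add_tsub_cancel_left]
        refine ⟨⟨⟨n, hnF⟩, ⟨W0, ⟨⟨?_, ?_, ?_⟩, hW0cont⟩⟩⟩, ?_⟩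
        · exact fun x hx => hpath x (List.mem_cons_of_mem _ hx)
        · intro i
          have := hpre (i + 1)
          rw [List.take_succ_cons, List.sum_cons] at this
          push_cast at *
          omega
        · have := hsum
          rw [List.sum_cons] at this
          push_cast at *
          omega
        · exact Subtype.ext (by simp [g, hsn])
  rw [← Nat.card_congr (Equiv.ofBijective g hbij), card_sigma']
  exact Finset.sum_coe_sort (m.support.image (· - 1))
    (fun n => Nat.card (Dset n (m - Finsupp.single (n + 1) 1)))

/-! ### The generating series -/

noncomputable def Tser : MvPowerSeries ℕ ℚ :=
  fun m => if m 0 = 0 then (Nat.card (Dset 0 m) : ℚ) else 0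

lemma coeff_Tser (m : ℕ →₀ ℕ) :
    coeff m Tser = if m 0 = 0 then (Nat.card (Dset 0 m) : ℚ) else 0 :=
  rfl

lemma coeff_X_mul' (j : ℕ) (A : MvPowerSeries ℕ ℚ) (m : ℕ →₀ ℕ) :
    coeff m (X j * A) = if m j = 0 then 0 else coeff (m - Finsupp.single j 1) A := by
  rw [X_def, coeff_monomial_mul]
  by_cases h : m j = 0
  · rw [if_neg, if_pos h]
    rw [Finsupp.single_le_iff]
    omega
  · rw [if_pos (Finsupp.single_le_iff.mpr (by omega)), if_neg h, one_mul]

lemma coeff_Tser_pow : ∀ (k : ℕ) (m : ℕ →₀ ℕ),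
    coeff m (Tser ^ (k + 1)) = if m 0 = 0 then (Nat.card (Dset k m) : ℚ) else 0
  | 0, m => by rw [pow_one, coeff_Tser]
  | (k + 1), m => by
    classical
    rw [pow_succ', coeff_mul]
    have hterm : ∀ p ∈ Finset.HasAntidiagonal.antidiagonal m,
        coeff p.1 Tser * coeff p.2 (Tser ^ (k + 1)) =
        (if p.1 0 = 0 then (Nat.card (Dset 0 p.1) : ℚ) else 0) *
        (if p.2 0 = 0 then (Nat.card (Dset k p.2) : ℚ) else 0) := fun p _ => by
      rw [coeff_Tser, coeff_Tser_pow k p.2]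
    rw [Finset.sum_congr rfl hterm]
    by_cases hm : m 0 = 0
    · rw [if_pos hm, card_Dset_succ]
      push_cast
      refine Finset.sum_congr rfl fun p hp => ?_
      have hsum := Finset.HasAntidiagonal.mem_antidiagonal.mp hp
      have happ : p.1 0 + p.2 0 = m 0 := by
        rw [← Finsupp.add_apply, hsum]
      rw [if_pos (by omega), if_pos (by omega)]
    · rw [if_neg hm]
      apply Finset.sum_eq_zero
      intro p hp
      have hsum := Finset.HasAntidiagonal.mem_antidiagonal.mp hp
      have happ : p.1 0 + p.2 0 = m 0 := by
        rw [← Finsupp.add_apply, hsum]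
      by_cases h1 : p.1 0 = 0
      · rw [if_pos h1, if_neg (show ¬ p.2 0 = 0 by omega), mul_zero]
      · rw [if_neg h1, zero_mul]

lemma coeff_tsum (A : MvPowerSeries ℕ ℚ) (m : ℕ →₀ ℕ) :
    coeff m (∑' n : ℕ, (X (n + 1) : MvPowerSeries ℕ ℚ) * A ^ (n + 1)) =
      ∑ n ∈ m.support.image (· - 1),
        coeff m ((X (n + 1) : MvPowerSeries ℕ ℚ) * A ^ (n + 1)) := by
  classical
  set f : ℕ → MvPowerSeries ℕ ℚ := fun n => X (n + 1) * A ^ (n + 1) with hf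
  have hvanish : ∀ (μ : ℕ →₀ ℕ), ∀ n ∉ μ.support.image (· - 1), coeff μ (f n) = 0 := by
    intro μ n hn
    rw [hf, coeff_X_mul']
    have : μ (n + 1) = 0 := by
      by_contra hcon
      exact hn (Finset.mem_image.mpr ⟨n + 1, Finsupp.mem_support_iff.mpr hcon, rfl⟩)
    rw [if_pos this]
  set L : MvPowerSeries ℕ ℚ :=
    fun μ => ∑ n ∈ μ.support.image (· - 1), coeff μ (f n) with hL
  have hhs : HasSum f L := by
    apply Pi.hasSum.mpr
    intro μ
    exact hasSum_sum_of_ne_finset_zero (hvanish μ)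
  haveI : T2Space (MvPowerSeries ℕ ℚ) := inferInstanceAs (T2Space ((ℕ →₀ ℕ) → ℚ))
  rw [hhs.tsum_eq]
  rfl

lemma sub_single_apply_zero (m : ℕ →₀ ℕ) (n : ℕ) :
    (m - Finsupp.single (n + 1) 1 : ℕ →₀ ℕ) 0 = m 0 := by
  rw [Finsupp.tsub_apply, Finsupp.single_apply, if_neg (by omega)]
  rfl

lemma Tser_eq : Tser = 1 + ∑' n : ℕ, (X (n + 1) : MvPowerSeries ℕ ℚ) * Tser ^ (n + 1) := by
  ext m
  rw [map_add, coeff_one, coeff_tsum, coeff_Tser]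
  by_cases hm0 : m 0 = 0
  · rw [if_pos hm0]
    by_cases hm : m = 0
    · subst hm
      rw [if_pos rfl]
      have hsupp : (0 : ℕ →₀ ℕ).support.image (· - 1) = ∅ := by simp
      rw [hsupp, Finset.sum_empty, add_zero, Dset_zero_zero]
      simp
    · rw [if_neg hm, card_Dset_top hm0 hm]
      push_cast
      rw [zero_add]
      refine Finset.sum_congr rfl fun n hn => ?_
      obtain ⟨j, hj, rfl⟩ := Finset.mem_image.mp hn
      have hj0 : j ≠ 0 := fun h => by
        rw [h] at hj; exact (Finsupp.mem_support_iff.mp hj) hm0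
      have hj1 : j - 1 + 1 = j := by omega
      have hmn : m (j - 1 + 1) ≠ 0 := by
        rw [hj1]; exact Finsupp.mem_support_iff.mp hj
      rw [coeff_X_mul', if_neg hmn, coeff_Tser_pow,
        if_pos (by rw [sub_single_apply_zero]; exact hm0)]
  · rw [if_neg hm0, if_neg (fun h => hm0 (by rw [h]; rfl))]
    rw [zero_add]
    symm
    apply Finset.sum_eq_zero
    intro n _
    rw [coeff_X_mul']
    by_cases h : m (n + 1) = 0
    · rw [if_pos h]
    · rw [if_neg h, coeff_Tser_pow, if_neg (by rw [sub_single_apply_zero]; exact hm0)]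

/-! ### Uniqueness -/

lemma coeff_pow_congr {A B : MvPowerSeries ℕ ℚ} :
    ∀ (k : ℕ) (μ : ℕ →₀ ℕ), (∀ ν ≤ μ, coeff ν A = coeff ν B) →
      coeff μ (A ^ k) = coeff μ (B ^ k)
  | 0, μ, _ => rfl
  | (k + 1), μ, h => by
    classical
    rw [pow_succ', pow_succ', coeff_mul, coeff_mul]
    refine Finset.sum_congr rfl fun p hp => ?_
    have hsum := Finset.HasAntidiagonal.mem_antidiagonal.mp hp
    have h1 : p.1 ≤ μ := hsum ▸ self_le_add_right p.1 p.2
    have h2 : p.2 ≤ μ := hsum ▸ self_le_add_left p.2 p.1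
    rw [h p.1 h1, coeff_pow_congr k p.2 (fun ν hν => h ν (le_trans hν h2))]

lemma degree_mono {ν μ : ℕ →₀ ℕ} (h : ν ≤ μ) : ν.degree ≤ μ.degree := by
  unfold Finsupp.degree
  calc ∑ i ∈ ν.support, ν i ≤ ∑ i ∈ ν.support, μ i :=
        Finset.sum_le_sum fun i _ => Finsupp.le_def.mp h i
    _ ≤ ∑ i ∈ μ.support, μ i :=
        Finset.sum_le_sum_of_subset (Finsupp.support_mono h)

lemma degree_sub_single_lt {m : ℕ →₀ ℕ} {j : ℕ} (h : m j ≠ 0) :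
    (m - Finsupp.single j 1).degree < m.degree := by
  have hle : Finsupp.single j 1 ≤ m := Finsupp.single_le_iff.mpr (by omega)
  have hm : (m - Finsupp.single j 1) + Finsupp.single j 1 = m := tsub_add_cancel_of_le hle
  have hadd : ∀ a b : ℕ →₀ ℕ, (a + b).degree = a.degree + b.degree := by
    intro a b
    show (a + b).sum (fun _ n => n) = a.sum (fun _ n => n) + b.sum (fun _ n => n)
    exact Finsupp.sum_add_index' (fun _ => rfl) (fun _ _ _ => rfl)
  have hsingle : (Finsupp.single j 1 : ℕ →₀ ℕ).degree = 1 := by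
    exact Finsupp.degree_single j 1
  have hdeg : m.degree = (m - Finsupp.single j 1).degree + 1 := by
    conv_lhs => rw [← hm]
    rw [hadd, hsingle]
  omega

lemma solution_unique {A B : MvPowerSeries ℕ ℚ}
    (hA : A = 1 + ∑' n : ℕ, (X (n + 1) : MvPowerSeries ℕ ℚ) * A ^ (n + 1))
    (hB : B = 1 + ∑' n : ℕ, (X (n + 1) : MvPowerSeries ℕ ℚ) * B ^ (n + 1)) : A = B := by
  have key : ∀ d : ℕ, ∀ m : ℕ →₀ ℕ, m.degree = d → coeff m A = coeff m B := by
    intro d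
    induction d using Nat.strong_induction_on with
    | _ d ih =>
      intro m hm
      conv_lhs => rw [hA]
      conv_rhs => rw [hB]
      rw [map_add, map_add, coeff_tsum, coeff_tsum]
      congr 1
      refine Finset.sum_congr rfl fun n _ => ?_
      rw [coeff_X_mul', coeff_X_mul']
      by_cases h : m (n + 1) = 0
      · rw [if_pos h, if_pos h]
      · rw [if_neg h, if_neg h]
        refine coeff_pow_congr (n + 1) _ fun ν hν => ?_
        have hlt : ν.degree < d := by
          calc ν.degree ≤ (m - Finsupp.single (n + 1) 1).degree := degree_mono hν
            _ < m.degree := degree_sub_single_lt h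
            _ = d := hm
        exact ih ν.degree hlt ν rfl
  exact MvPowerSeries.ext fun m => key m.degree m rfl


/-- (Theorem 3: `S` counts excursions.) For every finitely supported exponent function
`m` (supported on the variables `t_i`, `i ≥ 1`), the set of excursions with up-step
content `m` is finite, and the coefficient of `∏_{i ≥ 1} t_i ^ (m i)` in `S` is its
cardinality. -/
theorem geode_stmt9 (S : MvPowerSeries ℕ ℚ)
    (hS : S = 1 + ∑' n : ℕ, (X (n + 1) : MvPowerSeries ℕ ℚ) * S ^ (n + 1)) :
    ∀ m : ℕ →₀ ℕ, m 0 = 0 →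
      {P : List ℤ | Excursion P ∧ HasContent m P}.Finite ∧
        coeff m S = (Nat.card {P : List ℤ | Excursion P ∧ HasContent m P} : ℚ) := by
  intro m hm0
  have hST : S = Tser := solution_unique hS Tser_eq
  have hset : {P : List ℤ | Excursion P ∧ HasContent m P} = Dset 0 m := by
    ext P
    simp only [Set.mem_setOf_eq, Dset, descFrom_zero, hasContent_iff hm0]
  rw [hset]
  exact ⟨finite_Dset 0 m, by rw [hST, coeff_Tser, if_pos hm0]⟩
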